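/- There is no continuous function X : [0,∞) → ℝ with X(0) = 0 satisfying X(t) = ∫₀ᵗ (1/2 - sgn(X(s))) ds for all t ≥ 0, where sgn(x) = 1 for x > 0, -1 for x < 0, and 0 for x = 0. -/

import Mathlib

open MeasureTheory Set

private lemma measurable_real_sign : Measurable Real.sign := by
  unfold Real.sign
  exact Measurable.ite measurableSet_Iio measurable_const
    (Measurable.ite (measurableSet_lt measurable_const measurable_id) measurable_const
      measurable_const)

/-- There is no continuous function `X : [0,∞) → ℝ` with `X 0 = 0` satisfying
`X t = ∫₀ᵗ (1/2 - sgn (X s)) ds` for all `t ≥ 0`. -/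
theorem stmt_0 :
    ¬ ∃ X : ℝ → ℝ, ContinuousOn X (Set.Ici 0) ∧ X 0 = 0 ∧
      ∀ t : ℝ, 0 ≤ t → X t = ∫ s in (0:ℝ)..t, (1/2 - Real.sign (X s)) := by
  rintro ⟨X, hcont, h0, hX⟩
  set f : ℝ → ℝ := fun s => 1/2 - Real.sign (X s) with hf
  -- integrability of f on [a, b] for 0 ≤ a ≤ b
  have hint : ∀ a b : ℝ, 0 ≤ a → a ≤ b →
      IntervalIntegrable f volume a b := by
    intro a b ha hab
    rw [intervalIntegrable_iff_integrableOn_Ioc_of_le hab]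
    have hsub : Set.Ioc a b ⊆ Set.Ici 0 := fun x hx => le_trans ha hx.1.le
    have hXm : AEMeasurable X (volume.restrict (Set.Ioc a b)) :=
      (hcont.aemeasurable measurableSet_Ici).mono_measure
        (Measure.restrict_mono hsub le_rfl)
    have hfm : AEStronglyMeasurable f (volume.restrict (Set.Ioc a b)) :=
      (aemeasurable_const.sub (measurable_real_sign.comp_aemeasurable hXm)).aestronglyMeasurable
    refine Integrable.mono' (integrable_const (2:ℝ)) hfm ?_
    refine Filter.Eventually.of_forall fun x => ?_
    have hs : |Real.sign (X x)| ≤ 1 := by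
      rcases Real.sign_apply_eq (X x) with h | h | h <;> rw [h] <;> norm_num
    have : |f x| ≤ |(1:ℝ)/2| + |Real.sign (X x)| := abs_sub _ _
    rw [Real.norm_eq_abs]
    calc |f x| ≤ |(1:ℝ)/2| + |Real.sign (X x)| := this
      _ ≤ 1/2 + 1 := by rw [abs_of_pos]; linarith; norm_num
      _ ≤ 2 := by norm_num
  -- X t = 0 for all t ≥ 0
  have hzero : ∀ t : ℝ, 0 ≤ t → X t = 0 := by
    intro t0 ht0
    by_contra hne
    have ht0pos : 0 < t0 := by
      rcases ht0.lt_or_eq with h | h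
      · exact h
      · exact absurd (h ▸ h0) hne
    -- the last zero of X before t0
    set S : Set ℝ := Set.Icc 0 t0 ∩ X ⁻¹' {0} with hS
    have hScl : IsClosed S :=
      (hcont.mono (Set.Icc_subset_Ici_self)).preimage_isClosed_of_isClosed
        isClosed_Icc isClosed_singleton
    have hSne : S.Nonempty := ⟨0, ⟨le_refl 0, ht0⟩, h0⟩
    have hSbd : BddAbove S := ⟨t0, fun x hx => hx.1.2⟩
    set a : ℝ := sSup S with haDef
    have haS : a ∈ S := hScl.csSup_mem hSne hSbd
    have ha0 : 0 ≤ a := haS.1.1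
    have hat0 : a ≤ t0 := haS.1.2
    have hXa : X a = 0 := haS.2
    have halt : a < t0 := by
      rcases hat0.lt_or_eq with h | h
      · exact h
      · exact absurd (h ▸ hXa) hne
    have key : X t0 - X a = ∫ s in a..t0, f s := by
      rw [hX t0 ht0, hX a ha0]
      exact (intervalIntegral.integral_interval_sub_left (hint 0 t0 le_rfl ht0)
        (hint 0 a le_rfl ha0))
    rcases lt_or_gt_of_ne hne with hneg | hpos
    · -- X t0 < 0 : X < 0 on (a, t0], so f = 3/2 there, making X t0 > 0
      have hXneg : ∀ s ∈ Set.Ioc a t0, X s < 0 := by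
        intro s hs
        rcases lt_trichotomy (X s) 0 with h | h | h
        · exact h
        · exact absurd (le_csSup hSbd ⟨⟨le_trans ha0 hs.1.le, hs.2⟩, h⟩) (not_le.2 hs.1)
        · -- IVT : a zero of X strictly between s and t0
          have hst0 : s ≤ t0 := hs.2
          have hcont' : ContinuousOn X (Set.Icc s t0) :=
            hcont.mono (fun x hx => le_trans (le_trans ha0 hs.1.le) hx.1)
          have : (0:ℝ) ∈ Set.Icc (X t0) (X s) := ⟨hneg.le, h.le⟩
          obtain ⟨c, hc, hXc⟩ := intermediate_value_Icc' hst0 hcont' this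
          have : c ≤ a := le_csSup hSbd ⟨⟨le_trans ha0 (le_trans hs.1.le hc.1), hc.2⟩, hXc⟩
          exact absurd (lt_of_lt_of_le hs.1 (le_trans hc.1 this)) (lt_irrefl a)
      have : ∫ s in a..t0, f s = (3/2) * (t0 - a) := by
        rw [intervalIntegral.integral_of_le halt.le]
        rw [setIntegral_congr_fun measurableSet_Ioc
          (g := fun _ => (3/2 : ℝ)) (fun s hs => by
            simp only [hf, Real.sign_of_neg (hXneg s hs)]; norm_num)]
        simp [Real.volume_Ioc, ENNReal.toReal_ofReal (sub_nonneg.2 halt.le), max_eq_left (sub_nonneg.2 halt.le)]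
        ring
      rw [this, hXa, sub_zero] at key
      nlinarith
    · -- X t0 > 0 : X > 0 on (a, t0], so f = -1/2 there, making X t0 < 0
      have hXpos : ∀ s ∈ Set.Ioc a t0, 0 < X s := by
        intro s hs
        rcases lt_trichotomy (X s) 0 with h | h | h
        · have hst0 : s ≤ t0 := hs.2
          have hcont' : ContinuousOn X (Set.Icc s t0) :=
            hcont.mono (fun x hx => le_trans (le_trans ha0 hs.1.le) hx.1)
          have : (0:ℝ) ∈ Set.Icc (X s) (X t0) := ⟨h.le, hpos.le⟩
          obtain ⟨c, hc, hXc⟩ := intermediate_value_Icc hst0 hcont' this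
          have : c ≤ a := le_csSup hSbd ⟨⟨le_trans ha0 (le_trans hs.1.le hc.1), hc.2⟩, hXc⟩
          exact absurd (lt_of_lt_of_le hs.1 (le_trans hc.1 this)) (lt_irrefl a)
        · exact absurd (le_csSup hSbd ⟨⟨le_trans ha0 hs.1.le, hs.2⟩, h⟩) (not_le.2 hs.1)
        · exact h
      have : ∫ s in a..t0, f s = (-(1/2)) * (t0 - a) := by
        rw [intervalIntegral.integral_of_le halt.le]
        rw [setIntegral_congr_fun measurableSet_Ioc
          (g := fun _ => (-(1/2) : ℝ)) (fun s hs => by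
            simp only [hf, Real.sign_of_pos (hXpos s hs)]; norm_num)]
        simp [Real.volume_Ioc, ENNReal.toReal_ofReal (sub_nonneg.2 halt.le), max_eq_left (sub_nonneg.2 halt.le)]
        ring
      rw [this, hXa, sub_zero] at key
      nlinarith
  -- but then X 1 = ∫₀¹ 1/2 = 1/2 ≠ 0
  have h1 : X 1 = 0 := hzero 1 zero_le_one
  have h2 : X 1 = ∫ s in (0:ℝ)..1, f s := hX 1 zero_le_one
  have h3 : ∫ s in (0:ℝ)..1, f s = 1/2 := by
    rw [intervalIntegral.integral_of_le zero_le_one]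
    rw [setIntegral_congr_fun measurableSet_Ioc
      (g := fun _ => (1/2 : ℝ)) (fun s hs => by
        simp only [hf, hzero s hs.1.le, Real.sign_zero, sub_zero])]
    simp
  rw [h1, h3] at h2
  norm_num at h2
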